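/- Suppose A belongs to the class 𝒜 and X is a σ-Dedekind complete Banach lattice. Then l_Φ^A(X), equipped with the coordinatewise order and the norm ‖·‖_Φ^A, is a Banach lattice (in particular |x̄| ≤ |ȳ| coordinatewise implies ‖x̄‖_Φ^A ≤ ‖ȳ‖_Φ^A), and it is σ-Dedekind complete: every sequence (x̄^{(n)}) of nonnegative elements of l_Φ^A(X) that is order bounded above by some ȳ ∈ l_Φ^A(X) has a supremum in l_Φ^A(X). -/

import Mathlib

open Filter Topology

/-- An Orlicz function: convex, nondecreasing, continuous on `[0,∞)`,
vanishing at `0`, positive on `(0,∞)`, tending to `∞` at `∞`. -/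
structure IsOrliczFn (φ : ℝ → ℝ) : Prop where
  convexOn : ConvexOn ℝ (Set.Ici (0 : ℝ)) φ
  monotoneOn : MonotoneOn φ (Set.Ici (0 : ℝ))
  continuousOn : ContinuousOn φ (Set.Ici (0 : ℝ))
  map_zero : φ 0 = 0
  pos : ∀ t : ℝ, 0 < t → 0 < φ t
  tendsto_atTop : Filter.Tendsto φ Filter.atTop Filter.atTop

/-- A Musielak-Orlicz function: a sequence of Orlicz functions. -/
def IsMusielakOrlicz (Φ : ℕ → ℝ → ℝ) : Prop := ∀ n, IsOrliczFn (Φ n)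

/-- Condition δ₂ for a Musielak-Orlicz function. -/
def MOCondDelta2 (Φ : ℕ → ℝ → ℝ) : Prop :=
  ∃ K > (0 : ℝ), ∃ δ > (0 : ℝ), ∃ c : ℕ → ℝ, (∀ n, 0 ≤ c n) ∧ Summable c ∧
    ∀ n : ℕ, ∀ x : ℝ, 0 ≤ x → Φ n x ≤ δ → Φ n (2 * x) ≤ K * Φ n x + c n

/-- Condition (*) for a Musielak-Orlicz function. -/
def MOCondStar (Φ : ℕ → ℝ → ℝ) : Prop :=
  ∀ ε : ℝ, ε ∈ Set.Ioo (0 : ℝ) 1 → ∃ δ > (0 : ℝ), ∀ n : ℕ, ∀ u : ℝ, 0 ≤ u →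
    Φ n u < 1 - ε → Φ n ((1 + δ) * u) ≤ 1

/-- The class 𝒜 of infinite matrices: every column is nonzero. -/
def MatrixClassA (a : ℕ → ℕ → ℝ) : Prop := ∀ k, ∃ n, a n k ≠ 0

/-- A triangle matrix: nonzero diagonal, zero above the diagonal. -/
def IsTriangle (a : ℕ → ℕ → ℝ) : Prop := (∀ n, a n n ≠ 0) ∧ ∀ n k, n < k → a n k = 0

/-- The `n`-th row sum `∑_k |a_{nk}| ‖x_k‖`. -/
noncomputable def rowSum {X : Type*} [NormedAddCommGroup X]
    (a : ℕ → ℕ → ℝ) (x : ℕ → X) (n : ℕ) : ℝ :=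
  ∑' k, |a n k| * ‖x k‖

/-- Membership in the generalized Musielak-Orlicz sequence space `l_Φ^A(X)`:
`x` is a bounded sequence whose row sums are finite and
`∑_n φ_n(rowSum_n / σ) < ∞` for some `σ > 0`. -/
def MemL {X : Type*} [NormedAddCommGroup X]
    (Φ : ℕ → ℝ → ℝ) (a : ℕ → ℕ → ℝ) (x : ℕ → X) : Prop :=
  (∃ C : ℝ, ∀ k, ‖x k‖ ≤ C) ∧ (∀ n, Summable fun k => |a n k| * ‖x k‖) ∧
    ∃ σ > (0 : ℝ), Summable fun n => Φ n (rowSum a x n / σ)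

/-- Membership in `h_Φ^A(X)`: as `MemL` but for every `σ > 0`. -/
def MemH {X : Type*} [NormedAddCommGroup X]
    (Φ : ℕ → ℝ → ℝ) (a : ℕ → ℕ → ℝ) (x : ℕ → X) : Prop :=
  (∃ C : ℝ, ∀ k, ‖x k‖ ≤ C) ∧ (∀ n, Summable fun k => |a n k| * ‖x k‖) ∧
    ∀ σ > (0 : ℝ), Summable fun n => Φ n (rowSum a x n / σ)

/-- The Luxemburg-type norm `‖x‖_Φ^A`. -/
noncomputable def ANorm {X : Type*} [NormedAddCommGroup X]
    (Φ : ℕ → ℝ → ℝ) (a : ℕ → ℕ → ℝ) (x : ℕ → X) : ℝ :=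
  sInf {σ : ℝ | 0 < σ ∧ (Summable fun n => Φ n (rowSum a x n / σ)) ∧
    (∑' n, Φ n (rowSum a x n / σ)) ≤ 1}

/-- The modular `ρ_Φ^A(x) = ∑_n φ_n(∑_k |a_{nk}| ‖x_k‖)`. -/
noncomputable def rhoA {X : Type*} [NormedAddCommGroup X]
    (Φ : ℕ → ℝ → ℝ) (a : ℕ → ℕ → ℝ) (x : ℕ → X) : ℝ :=
  ∑' n, Φ n (rowSum a x n)

/-- The `m`-th section of a sequence: first `m` coordinates kept, rest zero. -/
def sect {X : Type*} [Zero X] (x : ℕ → X) (m : ℕ) : ℕ → X :=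
  fun k => if k < m then x k else 0


section AuxLemmas

lemma IsOrliczFn.nonneg' {φ : ℝ → ℝ} (h : IsOrliczFn φ) {t : ℝ} (ht : 0 ≤ t) : 0 ≤ φ t := by
  have := h.monotoneOn (Set.mem_Ici.2 le_rfl) (Set.mem_Ici.2 ht) ht
  simpa [h.map_zero] using this

lemma IsOrliczFn.mono' {φ : ℝ → ℝ} (h : IsOrliczFn φ) {s t : ℝ} (hs : 0 ≤ s) (hst : s ≤ t) :
    φ s ≤ φ t :=
  h.monotoneOn (Set.mem_Ici.2 hs) (Set.mem_Ici.2 (hs.trans hst)) hst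

lemma IsOrliczFn.div_le' {φ : ℝ → ℝ} (h : IsOrliczFn φ) {t l : ℝ} (ht : 0 ≤ t) (hl : 1 ≤ l) :
    φ (t / l) ≤ φ t / l := by
  have h0 : (0:ℝ) < l := lt_of_lt_of_le one_pos hl
  have hb : (0:ℝ) ≤ 1 / l := by positivity
  have ha : (0:ℝ) ≤ 1 - 1 / l := by
    have : 1 / l ≤ 1 := by rw [div_le_one h0]; exact hl
    linarith
  have := h.convexOn.2 (Set.mem_Ici.2 le_rfl) (Set.mem_Ici.2 ht) ha hb (by ring)
  simp only [smul_eq_mul, mul_zero, zero_add, h.map_zero] at this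
  calc φ (t / l) = φ (1 / l * t) := by rw [one_div_mul_eq_div]
    _ ≤ (1 - 1/l) * 0 + 1/l * φ t := by simpa using this
    _ = φ t / l := by ring

lemma IsOrliczFn.half_add {φ : ℝ → ℝ} (h : IsOrliczFn φ) {u v : ℝ} (hu : 0 ≤ u) (hv : 0 ≤ v) :
    φ ((u + v) / 2) ≤ (φ u + φ v) / 2 := by
  have := h.convexOn.2 (Set.mem_Ici.2 hu) (Set.mem_Ici.2 hv)
    (show (0:ℝ) ≤ 1/2 by norm_num) (show (0:ℝ) ≤ 1/2 by norm_num)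
    (show (1:ℝ)/2 + 1/2 = 1 by norm_num)
  simp only [smul_eq_mul] at this
  calc φ ((u + v)/2) = φ (1/2*u + 1/2*v) := by ring_nf
    _ ≤ 1/2 * φ u + 1/2 * φ v := this
    _ = (φ u + φ v)/2 := by ring

lemma rowSum_nonneg {X : Type*} [NormedAddCommGroup X] (a : ℕ → ℕ → ℝ) (x : ℕ → X) (n : ℕ) :
    0 ≤ rowSum a x n :=
  tsum_nonneg fun k => by positivity

/-- Membership in `l_Φ^A(X)` is inherited under pointwise norm domination. -/
lemma memL_of_norm_le {X : Type*} [NormedAddCommGroup X]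
    (Φ : ℕ → ℝ → ℝ) (hΦ : IsMusielakOrlicz Φ) (a : ℕ → ℕ → ℝ) {x y : ℕ → X}
    (hy : MemL Φ a y) (h : ∀ k, ‖x k‖ ≤ ‖y k‖) : MemL Φ a x := by
  obtain ⟨⟨C, hC⟩, hS, σ, hσ, hs⟩ := hy
  have hSx : ∀ n, Summable fun k => |a n k| * ‖x k‖ := fun n =>
    (hS n).of_nonneg_of_le (fun k => by positivity)
      (fun k => mul_le_mul_of_nonneg_left (h k) (abs_nonneg _))
  have hrs : ∀ n, rowSum a x n ≤ rowSum a y n := fun n =>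
    Summable.tsum_le_tsum (fun k => mul_le_mul_of_nonneg_left (h k) (abs_nonneg _)) (hSx n) (hS n)
  refine ⟨⟨C, fun k => (h k).trans (hC k)⟩, hSx, σ, hσ, ?_⟩
  refine hs.of_nonneg_of_le (fun n => (hΦ n).nonneg' (div_nonneg (rowSum_nonneg a x n) hσ.le))
    (fun n => (hΦ n).mono' (div_nonneg (rowSum_nonneg a x n) hσ.le) ?_)
  exact (div_le_div_iff_of_pos_right hσ).2 (hrs n)

end AuxLemmas

/-- if `A ∈ 𝒜` and `X` is a σ-Dedekind complete Banach lattice,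
then `l_Φ^A(X)` with the coordinatewise order is a Banach lattice
(lattice operations stay in the space and the norm is monotone with respect to
absolute values) and it is σ-Dedekind complete. -/
theorem lPhiA_sigma_dedekind_complete_banach_lattice
    {X : Type*} [NormedAddCommGroup X] [Lattice X] [HasSolidNorm X]
    [IsOrderedAddMonoid X] [NormedSpace ℝ X] [CompleteSpace X]
    (hDC : ∀ f : ℕ → X, (∀ n, 0 ≤ f n) → (∃ b : X, ∀ n, f n ≤ b) →
      ∃ s : X, IsLUB (Set.range f) s)
    (Φ : ℕ → ℝ → ℝ) (hΦ : IsMusielakOrlicz Φ)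
    (a : ℕ → ℕ → ℝ) (hA : MatrixClassA a) :
    (∀ x y : ℕ → X, MemL Φ a x → MemL Φ a y → MemL Φ a (fun k => x k ⊔ y k)) ∧
    (∀ x y : ℕ → X, MemL Φ a x → MemL Φ a y → (∀ k, |x k| ≤ |y k|) →
      ANorm Φ a x ≤ ANorm Φ a y) ∧
    (∀ F : ℕ → ℕ → X, (∀ n, MemL Φ a (F n)) → (∀ n k, 0 ≤ F n k) →
      ∀ y : ℕ → X, MemL Φ a y → (∀ n k, F n k ≤ y k) →
      ∃ x : ℕ → X, MemL Φ a x ∧ (∀ n k, F n k ≤ x k) ∧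
        ∀ z : ℕ → X, MemL Φ a z → (∀ n k, F n k ≤ z k) → ∀ k, x k ≤ z k) := by
  have hrsnn := fun (x : ℕ → X) n => rowSum_nonneg a x n
  refine ⟨?_, ?_, ?_⟩
  · -- lattice supremum stays in the space
    rintro x y ⟨⟨Cx, hCx⟩, hSx, σx, hσx, hsx⟩ ⟨⟨Cy, hCy⟩, hSy, σy, hσy, hsy⟩
    have hnorm : ∀ k, ‖x k ⊔ y k‖ ≤ ‖x k‖ + ‖y k‖ := by
      intro k
      have habs : |x k ⊔ y k| ≤ |x k| + |y k| := by
        rw [abs_le']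
        constructor
        · exact sup_le ((le_abs_self _).trans (le_add_of_nonneg_right (abs_nonneg _)))
            ((le_abs_self _).trans (le_add_of_nonneg_left (abs_nonneg _)))
        · calc -(x k ⊔ y k) ≤ -(x k) := neg_le_neg le_sup_left
            _ ≤ |x k| := neg_le_abs _
            _ ≤ |x k| + |y k| := le_add_of_nonneg_right (abs_nonneg _)
      calc ‖x k ⊔ y k‖ ≤ ‖|x k| + |y k|‖ :=
            norm_le_norm_of_abs_le_abs (habs.trans (le_abs_self _))
        _ ≤ ‖|x k|‖ + ‖|y k|‖ := norm_add_le _ _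
        _ = ‖x k‖ + ‖y k‖ := by rw [norm_abs_eq_norm, norm_abs_eq_norm]
    have hS : ∀ n, Summable fun k => |a n k| * ‖x k ⊔ y k‖ := by
      intro n
      refine ((hSx n).add (hSy n)).of_nonneg_of_le (fun k => by positivity) (fun k => ?_)
      calc |a n k| * ‖x k ⊔ y k‖ ≤ |a n k| * (‖x k‖ + ‖y k‖) :=
            mul_le_mul_of_nonneg_left (hnorm k) (abs_nonneg _)
        _ = |a n k| * ‖x k‖ + |a n k| * ‖y k‖ := by ring
    have hrs : ∀ n, rowSum a (fun k => x k ⊔ y k) n ≤ rowSum a x n + rowSum a y n := by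
      intro n
      have h1 : rowSum a (fun k => x k ⊔ y k) n ≤
          ∑' k, (|a n k| * ‖x k‖ + |a n k| * ‖y k‖) := by
        refine Summable.tsum_le_tsum (fun k => ?_) (hS n) ((hSx n).add (hSy n))
        calc |a n k| * ‖x k ⊔ y k‖ ≤ |a n k| * (‖x k‖ + ‖y k‖) :=
              mul_le_mul_of_nonneg_left (hnorm k) (abs_nonneg _)
          _ = |a n k| * ‖x k‖ + |a n k| * ‖y k‖ := by ring
      rwa [Summable.tsum_add (hSx n) (hSy n)] at h1
    set σ := max σx σy with hσdef
    have hσ : 0 < σ := lt_max_of_lt_left hσx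
    have hmx : ∀ n, Φ n (rowSum a x n / σ) ≤ Φ n (rowSum a x n / σx) := fun n =>
      (hΦ n).mono' (div_nonneg (hrsnn x n) hσ.le)
        (div_le_div_of_nonneg_left (hrsnn x n) hσx (le_max_left _ _))
    have hmy : ∀ n, Φ n (rowSum a y n / σ) ≤ Φ n (rowSum a y n / σy) := fun n =>
      (hΦ n).mono' (div_nonneg (hrsnn y n) hσ.le)
        (div_le_div_of_nonneg_left (hrsnn y n) hσy (le_max_right _ _))
    refine ⟨⟨Cx + Cy, fun k => (hnorm k).trans (add_le_add (hCx k) (hCy k))⟩, hS,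
      2 * σ, by positivity, ?_⟩
    have hbound : ∀ n, Φ n (rowSum a (fun k => x k ⊔ y k) n / (2 * σ)) ≤
        (Φ n (rowSum a x n / σx) + Φ n (rowSum a y n / σy)) / 2 := by
      intro n
      have h1 : rowSum a (fun k => x k ⊔ y k) n / (2 * σ) ≤
          (rowSum a x n / σ + rowSum a y n / σ) / 2 := by
        rw [div_le_div_iff₀ (by positivity) (by norm_num)]
        have := hrs n
        rw [← add_div]
        rw [div_mul_eq_mul_div, le_div_iff₀ hσ]
        nlinarith [hrsnn x n, hrsnn y n]
      calc Φ n (rowSum a (fun k => x k ⊔ y k) n / (2 * σ))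
          ≤ Φ n ((rowSum a x n / σ + rowSum a y n / σ) / 2) :=
            (hΦ n).mono' (div_nonneg (hrsnn _ n) (by positivity)) h1
        _ ≤ (Φ n (rowSum a x n / σ) + Φ n (rowSum a y n / σ)) / 2 :=
            (hΦ n).half_add (div_nonneg (hrsnn x n) hσ.le) (div_nonneg (hrsnn y n) hσ.le)
        _ ≤ (Φ n (rowSum a x n / σx) + Φ n (rowSum a y n / σy)) / 2 := by
            have := hmx n; have := hmy n; linarith
    refine ((hsx.add hsy).div_const 2).of_nonneg_of_le
      (fun n => (hΦ n).nonneg' (div_nonneg (hrsnn _ n) (by positivity))) (fun n => hbound n)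
  · -- monotonicity of the norm
    rintro x y hx hy hle
    obtain ⟨_, hSy, σ0, hσ0, hsy0⟩ := id hy
    have hnorm : ∀ k, ‖x k‖ ≤ ‖y k‖ := fun k => norm_le_norm_of_abs_le_abs (hle k)
    obtain ⟨_, hSx, _⟩ := memL_of_norm_le Φ hΦ a hy hnorm
    have hrs : ∀ n, rowSum a x n ≤ rowSum a y n := fun n =>
      Summable.tsum_le_tsum (fun k => mul_le_mul_of_nonneg_left (hnorm k) (abs_nonneg _)) (hSx n) (hSy n)
    have hsub : {σ : ℝ | 0 < σ ∧ (Summable fun n => Φ n (rowSum a y n / σ)) ∧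
        (∑' n, Φ n (rowSum a y n / σ)) ≤ 1} ⊆
        {σ : ℝ | 0 < σ ∧ (Summable fun n => Φ n (rowSum a x n / σ)) ∧
        (∑' n, Φ n (rowSum a x n / σ)) ≤ 1} := by
      rintro σ ⟨hσ, hsum, hts⟩
      have hterm : ∀ n, Φ n (rowSum a x n / σ) ≤ Φ n (rowSum a y n / σ) := fun n =>
        (hΦ n).mono' (div_nonneg (hrsnn x n) hσ.le)
          ((div_le_div_iff_of_pos_right hσ).2 (hrs n))
      have hsum' : Summable fun n => Φ n (rowSum a x n / σ) :=
        hsum.of_nonneg_of_le (fun n => (hΦ n).nonneg' (div_nonneg (hrsnn x n) hσ.le)) hterm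
      exact ⟨hσ, hsum', le_trans (Summable.tsum_le_tsum hterm hsum' hsum) hts⟩
    have hne : Set.Nonempty {σ : ℝ | 0 < σ ∧ (Summable fun n => Φ n (rowSum a y n / σ)) ∧
        (∑' n, Φ n (rowSum a y n / σ)) ≤ 1} := by
      set M := ∑' n, Φ n (rowSum a y n / σ0) with hM
      set l := max 1 M with hl
      have hl1 : (1:ℝ) ≤ l := le_max_left _ _
      have hl0 : (0:ℝ) < l := lt_of_lt_of_le one_pos hl1
      refine ⟨l * σ0, by positivity, ?_⟩
      have hterm : ∀ n, Φ n (rowSum a y n / (l * σ0)) ≤ Φ n (rowSum a y n / σ0) / l := by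
        intro n
        have : rowSum a y n / (l * σ0) = (rowSum a y n / σ0) / l := by
          rw [mul_comm, ← div_div]
        rw [this]
        exact (hΦ n).div_le' (div_nonneg (hrsnn y n) hσ0.le) hl1
      have hsum' : Summable fun n => Φ n (rowSum a y n / (l * σ0)) :=
        (hsy0.div_const l).of_nonneg_of_le
          (fun n => (hΦ n).nonneg' (div_nonneg (hrsnn y n) (by positivity))) hterm
      refine ⟨hsum', ?_⟩
      calc (∑' n, Φ n (rowSum a y n / (l * σ0)))
          ≤ ∑' n, Φ n (rowSum a y n / σ0) / l :=
            Summable.tsum_le_tsum hterm hsum' (hsy0.div_const l)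
        _ = M / l := by rw [tsum_div_const]
        _ ≤ 1 := by rw [div_le_one hl0]; exact le_max_right _ _
    unfold ANorm
    exact csInf_le_csInf ⟨0, fun σ hσ => hσ.1.le⟩ hne hsub
  · -- σ-Dedekind completeness
    intro F hF hF0 y hy hFy
    have hlub : ∀ k, ∃ s, IsLUB (Set.range fun n => F n k) s := fun k =>
      hDC (fun n => F n k) (fun n => hF0 n k) ⟨y k, fun n => hFy n k⟩
    choose x hx using hlub
    have hub : ∀ n k, F n k ≤ x k := fun n k => (hx k).1 ⟨n, rfl⟩
    have hxy : ∀ k, x k ≤ y k := fun k => (hx k).2 (by rintro z ⟨n, rfl⟩; exact hFy n k)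
    have hx0 : ∀ k, 0 ≤ x k := fun k => (hF0 0 k).trans (hub 0 k)
    have hnorm : ∀ k, ‖x k‖ ≤ ‖y k‖ := by
      intro k
      refine norm_le_norm_of_abs_le_abs ?_
      rw [abs_of_nonneg (hx0 k)]
      exact (hxy k).trans (le_abs_self _)
    refine ⟨x, memL_of_norm_le Φ hΦ a hy hnorm, hub, ?_⟩
    intro z _ hFz k
    exact (hx k).2 (by rintro w ⟨n, rfl⟩; exact hFz n k)
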